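/- Let Ψ be a branching mechanism of finite-variation form Ψ(u) = D·u + ∫_{(0,∞)} (e^{-uh} − 1) ν(dh), and let u(t,λ) solve ∂_t u = −Ψ(u), u(0,λ)=λ. Assume that for each t ≥ 0, u(t,λ) → ∞ as λ → ∞. Then lim_{λ→∞} u(t,λ)/λ = e^{-Dt} for all t ≥ 0. -/
import Mathlib


open Set MeasureTheory Filter

private lemma exp_sub_one_abs_le {y : ℝ} (hy : 0 ≤ y) : |Real.exp (-y) - 1| ≤ min 1 y := by
  have h1 : Real.exp (-y) ≤ 1 := by
    simpa using Real.exp_le_exp.mpr (neg_nonpos.mpr hy)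
  have h2 : 1 - y ≤ Real.exp (-y) := by
    have := Real.add_one_le_exp (-y); linarith
  have h3 : 0 ≤ Real.exp (-y) := (Real.exp_pos _).le
  rw [abs_of_nonpos (by linarith)]
  exact le_min (by linarith) (by linarith)

private lemma min_mul_le {x h : ℝ} (hx : 0 ≤ x) (hh : 0 < h) :
    min 1 (x * h) ≤ (x + 1) * min 1 h := by
  rcases le_total h 1 with h1 | h1
  · rw [min_eq_right h1]
    calc min 1 (x * h) ≤ x * h := min_le_right _ _
      _ ≤ (x + 1) * h := by nlinarith
  · rw [min_eq_left h1]
    calc min 1 (x * h) ≤ 1 := min_le_left _ _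
      _ ≤ (x + 1) * 1 := by nlinarith
      _ = (x + 1) * 1 := rfl

private lemma min_le_mul_min {x M h : ℝ} (hM : 0 < M) (hx : M ≤ x) (hh : 0 < h) :
    min 1 (x * h) ≤ x * min M⁻¹ h := by
  have hx0 : 0 < x := lt_of_lt_of_le hM hx
  have h2 : (1 : ℝ) ≤ x * M⁻¹ := by
    have := mul_le_mul_of_nonneg_right hx (inv_nonneg.mpr hM.le)
    rwa [mul_inv_cancel₀ hM.ne'] at this
  rw [mul_min_of_nonneg _ _ hx0.le]
  exact le_min ((min_le_left _ _).trans h2) (min_le_right _ _)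

theorem drift_coefficient (ν : Measure ℝ) (D : ℝ)
    (hν : IntegrableOn (fun h => min 1 h) (Set.Ioi (0:ℝ)) ν)
    (Ψ : ℝ → ℝ)
    (hΨ : ∀ x ≥ (0:ℝ), Ψ x = D * x + ∫ h in Set.Ioi (0:ℝ), (Real.exp (-(x*h)) - 1) ∂ν)
    (u : ℝ → ℝ → ℝ)
    (hode : ∀ l > (0:ℝ), ∀ t ≥ (0:ℝ), HasDerivAt (fun s => u s l) (-Ψ (u t l)) t)
    (hinit : ∀ l > (0:ℝ), u 0 l = l)
    (hblow : ∀ t ≥ (0:ℝ), Tendsto (fun l => u t l) atTop atTop) :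
    ∀ t ≥ (0:ℝ), Tendsto (fun l => u t l / l) atTop (nhds (Real.exp (-(D * t)))) := by
  intro t ht
  -- constants
  set C₀ : ℝ := ∫ h in Set.Ioi (0:ℝ), min 1 h ∂ν with hC₀def
  have hC₀ : 0 ≤ C₀ :=
    setIntegral_nonneg measurableSet_Ioi fun h hh => le_min zero_le_one (le_of_lt hh)
  set C : ℝ := |D| + C₀ with hCdef
  have hC : 0 ≤ C := by positivity
  -- coarse bound on the integral term
  have hInt_bound : ∀ x : ℝ, 0 ≤ x →
      ‖∫ h in Set.Ioi (0:ℝ), (Real.exp (-(x*h)) - 1) ∂ν‖ ≤ (x + 1) * C₀ := by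
    intro x hx
    have hg : IntegrableOn (fun h => (x + 1) * min 1 h) (Set.Ioi (0:ℝ)) ν := hν.const_mul _
    have hae : ∀ᵐ h ∂(ν.restrict (Set.Ioi (0:ℝ))),
        ‖Real.exp (-(x*h)) - 1‖ ≤ (x + 1) * min 1 h := by
      rw [ae_restrict_iff' measurableSet_Ioi]
      refine ae_of_all _ fun h hh => ?_
      have hh' : (0:ℝ) < h := hh
      have h1 : ‖Real.exp (-(x*h)) - 1‖ ≤ min 1 (x * h) := by
        rw [Real.norm_eq_abs]
        exact exp_sub_one_abs_le (mul_nonneg hx hh'.le)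
      exact h1.trans (min_mul_le hx hh')
    calc ‖∫ h in Set.Ioi (0:ℝ), (Real.exp (-(x*h)) - 1) ∂ν‖
        ≤ ∫ h in Set.Ioi (0:ℝ), (x + 1) * min 1 h ∂ν := norm_integral_le_of_norm_le hg hae
      _ = (x + 1) * C₀ := by rw [hC₀def, integral_const_mul]
  -- coarse bound on Ψ
  have hcoarse : ∀ x : ℝ, 0 ≤ x → |Ψ x| ≤ C * (x + 1) := by
    intro x hx
    rw [hΨ x hx]
    have h1 := hInt_bound x hx
    rw [Real.norm_eq_abs] at h1
    have h2 : |D * x| ≤ |D| * x := by rw [abs_mul, abs_of_nonneg hx]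
    calc |D * x + ∫ h in Set.Ioi (0:ℝ), (Real.exp (-(x*h)) - 1) ∂ν|
        ≤ |D * x| + |∫ h in Set.Ioi (0:ℝ), (Real.exp (-(x*h)) - 1) ∂ν| := abs_add_le _ _
      _ ≤ C * (x + 1) := by rw [hCdef]; nlinarith [abs_nonneg D]
  -- the fine error functional
  set φ : ℝ → ℝ := fun M => ∫ h in Set.Ioi (0:ℝ), min M⁻¹ h ∂ν with hφdef
  have hφmeas : ∀ M : ℝ, AEStronglyMeasurable (fun h : ℝ => min M⁻¹ h)
      (ν.restrict (Set.Ioi (0:ℝ))) :=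
    fun M => (continuous_const.min continuous_id).aestronglyMeasurable
  have hφ_int : ∀ M : ℝ, 1 ≤ M → IntegrableOn (fun h => min M⁻¹ h) (Set.Ioi (0:ℝ)) ν := by
    intro M hM
    refine hν.mono' (hφmeas M) ?_
    rw [ae_restrict_iff' measurableSet_Ioi]
    refine ae_of_all _ fun h hh => ?_
    have hh' : (0:ℝ) < h := hh
    have hM0 : (0:ℝ) < M := lt_of_lt_of_le one_pos hM
    rw [Real.norm_eq_abs, abs_of_nonneg (le_min (inv_nonneg.mpr hM0.le) hh'.le)]
    have hinv : M⁻¹ ≤ 1 := by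
      rw [inv_le_one₀ hM0]; exact hM
    exact min_le_min hinv le_rfl
  -- fine bound on Ψ
  have hfine : ∀ M : ℝ, 1 ≤ M → ∀ x : ℝ, M ≤ x → |Ψ x - D * x| ≤ x * φ M := by
    intro M hM x hx
    have hM0 : (0:ℝ) < M := lt_of_lt_of_le one_pos hM
    have hx0 : (0:ℝ) < x := lt_of_lt_of_le hM0 hx
    rw [hΨ x hx0.le]
    have hg : IntegrableOn (fun h => x * min M⁻¹ h) (Set.Ioi (0:ℝ)) ν :=
      (hφ_int M hM).const_mul _
    have hae : ∀ᵐ h ∂(ν.restrict (Set.Ioi (0:ℝ))),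
        ‖Real.exp (-(x*h)) - 1‖ ≤ x * min M⁻¹ h := by
      rw [ae_restrict_iff' measurableSet_Ioi]
      refine ae_of_all _ fun h hh => ?_
      have hh' : (0:ℝ) < h := hh
      have h1 : ‖Real.exp (-(x*h)) - 1‖ ≤ min 1 (x * h) := by
        rw [Real.norm_eq_abs]
        exact exp_sub_one_abs_le (mul_nonneg hx0.le hh'.le)
      exact h1.trans (min_le_mul_min hM0 hx hh')
    have key := norm_integral_le_of_norm_le hg hae
    rw [Real.norm_eq_abs] at key
    calc |D * x + (∫ h in Set.Ioi (0:ℝ), (Real.exp (-(x*h)) - 1) ∂ν) - D * x|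
        = |∫ h in Set.Ioi (0:ℝ), (Real.exp (-(x*h)) - 1) ∂ν| := by rw [add_sub_cancel_left]
      _ ≤ ∫ h in Set.Ioi (0:ℝ), x * min M⁻¹ h ∂ν := key
      _ = x * φ M := by rw [hφdef, integral_const_mul]
  -- φ tends to 0 at infinity
  have hφ0 : Tendsto φ atTop (nhds 0) := by
    have h0 : Tendsto φ atTop (nhds (∫ h in Set.Ioi (0:ℝ), (0:ℝ) ∂ν)) := by
      refine tendsto_integral_filter_of_dominated_convergence (fun h => min 1 h)
        (Eventually.of_forall hφmeas) ?_ hν ?_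
      · filter_upwards [eventually_ge_atTop (1:ℝ)] with M hM
        rw [ae_restrict_iff' measurableSet_Ioi]
        refine ae_of_all _ fun h hh => ?_
        have hh' : (0:ℝ) < h := hh
        have hM0 : (0:ℝ) < M := lt_of_lt_of_le one_pos hM
        rw [Real.norm_eq_abs, abs_of_nonneg (le_min (inv_nonneg.mpr hM0.le) hh'.le)]
        have hinv : M⁻¹ ≤ 1 := by
          rw [inv_le_one₀ hM0]; exact hM
        exact min_le_min hinv le_rfl
      · rw [ae_restrict_iff' measurableSet_Ioi]
        refine ae_of_all _ fun h hh => ?_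
        have hh' : (0:ℝ) < h := hh
        have : Tendsto (fun M : ℝ => M⁻¹) atTop (nhds 0) := tendsto_inv_atTop_zero
        refine this.congr' ?_
        filter_upwards [eventually_ge_atTop (max 1 h⁻¹)] with M hM
        have hM1 : (1:ℝ) ≤ M := le_trans (le_max_left _ _) hM
        have hM0 : (0:ℝ) < M := lt_of_lt_of_le one_pos hM1
        have : M⁻¹ ≤ h := by
          rw [inv_le_comm₀ hM0 hh']
          exact le_trans (le_max_right _ _) hM
        exact (min_eq_left this).symm
    simpa using h0
  -- continuity of u in s
  have hu_cont : ∀ l : ℝ, 0 < l → ContinuousOn (fun s => u s l) (Set.Icc 0 t) :=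
    fun l hl s hs => ((hode l hl s hs.1).continuousAt).continuousWithinAt
  -- monotonicity of the barrier function
  have key_mono : ∀ l : ℝ, 0 < l → ∀ τ : ℝ, 0 ≤ τ → τ ≤ t →
      (∀ s ∈ Set.Ioo (0:ℝ) τ, 0 ≤ u s l) →
      MonotoneOn (fun s => (u s l + 1) * Real.exp (C * s)) (Set.Icc 0 τ) := by
    intro l hl τ hτ0 hτt hpos
    have hder : ∀ s : ℝ, 0 ≤ s →
        HasDerivAt (fun s => (u s l + 1) * Real.exp (C * s))
          ((-Ψ (u s l)) * Real.exp (C * s) + (u s l + 1) * (Real.exp (C * s) * C)) s := by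
      intro s hs
      have h1 : HasDerivAt (fun s => u s l + 1) (-Ψ (u s l)) s :=
        (hode l hl s hs).add_const 1
      have h2 : HasDerivAt (fun s : ℝ => Real.exp (C * s)) (Real.exp (C * s) * C) s := by
        have : HasDerivAt (fun s : ℝ => C * s) C s := by
          simpa using (hasDerivAt_id s).const_mul C
        exact this.exp
      exact h1.mul h2
    refine monotoneOn_of_deriv_nonneg (convex_Icc _ _) ?_ ?_ ?_
    · intro s hs
      exact ((hder s hs.1).continuousAt).continuousWithinAt
    · rw [interior_Icc]
      intro s hs
      exact ((hder s hs.1.le).differentiableAt).differentiableWithinAt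
    · rw [interior_Icc]
      intro s hs
      rw [(hder s hs.1.le).deriv]
      have hu : 0 ≤ u s l := hpos s hs
      have hb := hcoarse (u s l) hu
      have hE : 0 < Real.exp (C * s) := Real.exp_pos _
      have := abs_le.mp hb
      nlinarith [this.1, this.2]
  -- positivity and lower bound
  have hlower : ∀ l : ℝ, Real.exp (C * t) < l → ∀ s ∈ Set.Icc (0:ℝ) t,
      0 < u s l ∧ (l + 1) * Real.exp (-(C * t)) - 1 ≤ u s l := by
    intro l hl
    have hl0 : 0 < l := lt_trans (Real.exp_pos _) hl
    have hpos : ∀ s ∈ Set.Icc (0:ℝ) t, 0 < u s l := by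
      by_contra hcon
      push_neg at hcon
      obtain ⟨s₀, hs₀, hs₀le⟩ := hcon
      set Z : Set ℝ := Set.Icc 0 t ∩ (fun s => u s l) ⁻¹' Set.Iic 0 with hZdef
      have hZne : Z.Nonempty := ⟨s₀, hs₀, hs₀le⟩
      have hZclosed : IsClosed Z :=
        (hu_cont l hl0).preimage_isClosed_of_isClosed isClosed_Icc isClosed_Iic
      have hZbdd : BddBelow Z := ⟨0, fun z hz => hz.1.1⟩
      set T : ℝ := sInf Z with hTdef
      have hTmem : T ∈ Z := hZclosed.csInf_mem hZne hZbdd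
      have hT0 : 0 < T := by
        rcases lt_or_eq_of_le hTmem.1.1 with h | h
        · exact h
        · exfalso
          have : u T l ≤ 0 := hTmem.2
          rw [← h, hinit l hl0] at this
          linarith
      have hpre : ∀ s ∈ Set.Ioo (0:ℝ) T, 0 ≤ u s l := by
        intro s hs
        by_contra hneg
        push_neg at hneg
        have hsZ : s ∈ Z := ⟨⟨hs.1.le, hs.2.le.trans hTmem.1.2⟩, hneg.le⟩
        have := csInf_le hZbdd hsZ
        rw [← hTdef] at this
        exact absurd hs.2 (not_lt.mpr this)
      have hmono := key_mono l hl0 T hT0.le hTmem.1.2 hpre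
      have h01 : (0:ℝ) ∈ Set.Icc (0:ℝ) T := ⟨le_rfl, hT0.le⟩
      have hT1 : T ∈ Set.Icc (0:ℝ) T := ⟨hT0.le, le_rfl⟩
      have hg := hmono h01 hT1 hT0.le
      simp only [hinit l hl0, mul_zero, Real.exp_zero, mul_one] at hg
      have h2 : (u T l + 1) * Real.exp (C * T) ≤ 1 * Real.exp (C * t) := by
        have hE : Real.exp (C * T) ≤ Real.exp (C * t) :=
          Real.exp_le_exp.mpr (mul_le_mul_of_nonneg_left hTmem.1.2 hC)
        have hT2 : u T l ≤ 0 := hTmem.2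
        have hu1 : u T l + 1 ≤ 1 := by linarith
        nlinarith [Real.exp_pos (C * T)]
      rw [one_mul] at h2
      linarith
    intro s hs
    refine ⟨hpos s hs, ?_⟩
    have hmono := key_mono l hl0 t ht le_rfl (fun r hr => (hpos r ⟨hr.1.le, hr.2.le⟩).le)
    have h01 : (0:ℝ) ∈ Set.Icc (0:ℝ) t := ⟨le_rfl, ht⟩
    have hg := hmono h01 hs hs.1
    simp only [hinit l hl0, mul_zero, Real.exp_zero, mul_one] at hg
    -- (l+1) ≤ (u s l + 1) * exp (C s)
    have hdiv : (l + 1) / Real.exp (C * s) ≤ u s l + 1 :=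
      (div_le_iff₀ (Real.exp_pos _)).mpr hg
    have e1 : Real.exp (-(C * t)) ≤ Real.exp (-(C * s)) := by
      apply Real.exp_le_exp.mpr
      have := mul_le_mul_of_nonneg_left hs.2 hC
      linarith
    have e2 : (l + 1) * Real.exp (-(C * s)) = (l + 1) / Real.exp (C * s) := by
      rw [Real.exp_neg, div_eq_mul_inv]
    nlinarith [e1, hdiv, e2, hl0]
  -- the blow-up rate function
  set m : ℝ → ℝ := fun l => (l + 1) * Real.exp (-(C * t)) - 1 with hmdef
  have hm_tendsto : Tendsto m atTop atTop := by
    apply tendsto_atTop_add_const_right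
    exact (tendsto_atTop_add_const_right atTop 1 tendsto_id).atTop_mul_const (Real.exp_pos _)
  -- the key logarithmic estimate
  have hkey : ∀ l : ℝ, Real.exp (C * t) < l → 1 ≤ m l →
      |Real.log (u t l) - Real.log l + D * t| ≤ φ (m l) * t := by
    intro l hl hml
    have hl0 : 0 < l := lt_trans (Real.exp_pos _) hl
    set F : ℝ → ℝ := fun s => Real.log (u s l) + D * s with hFdef
    set F' : ℝ → ℝ := fun s => -Ψ (u s l) / u s l + D with hF'def
    have hFder : ∀ s ∈ Set.Icc (0:ℝ) t, HasDerivWithinAt F (F' s) (Set.Icc 0 t) s := by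
      intro s hs
      have hu := (hlower l hl s hs).1
      have h1 : HasDerivAt (fun s => Real.log (u s l)) (-Ψ (u s l) / u s l) s :=
        (hode l hl0 s hs.1).log hu.ne'
      have h2 : HasDerivAt (fun s : ℝ => D * s) D s := by
        simpa using (hasDerivAt_id s).const_mul D
      exact (h1.add h2).hasDerivWithinAt
    have hbound : ∀ s ∈ Set.Icc (0:ℝ) t, ‖F' s‖ ≤ φ (m l) := by
      intro s hs
      obtain ⟨hu, hlow⟩ := hlower l hl s hs
      have hml' : m l ≤ u s l := hlow
      have h5 := hfine (m l) hml (u s l) hml'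
      simp only [hF'def, Real.norm_eq_abs]
      have heq : -Ψ (u s l) / u s l + D = -((Ψ (u s l) - D * u s l) / u s l) := by
        field_simp; ring
      rw [heq, abs_neg, abs_div, abs_of_pos hu]
      rw [div_le_iff₀ hu]
      linarith [h5]
    have hmv := (convex_Icc (0:ℝ) t).norm_image_sub_le_of_norm_hasDerivWithin_le hFder hbound
      (⟨le_rfl, ht⟩ : (0:ℝ) ∈ Set.Icc (0:ℝ) t) (⟨ht, le_rfl⟩ : t ∈ Set.Icc (0:ℝ) t)
    rw [hFdef] at hmv
    simp only [hinit l hl0, mul_zero, add_zero, sub_zero] at hmv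
    rw [Real.norm_eq_abs, Real.norm_eq_abs, abs_of_nonneg ht] at hmv
    calc |Real.log (u t l) - Real.log l + D * t|
        = |Real.log (u t l) + D * t - Real.log l| := by ring_nf
      _ ≤ φ (m l) * t := hmv
  -- assemble the limit
  have h1 : Tendsto (fun l => φ (m l) * t) atTop (nhds 0) := by
    have := (hφ0.comp hm_tendsto).mul_const t
    simpa using this
  have h0 : Tendsto (fun l => Real.log (u t l) - Real.log l + D * t) atTop (nhds 0) := by
    refine squeeze_zero_norm' ?_ h1
    filter_upwards [eventually_gt_atTop (Real.exp (C * t)), hm_tendsto.eventually_ge_atTop 1]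
      with l hl hml
    rw [Real.norm_eq_abs]
    exact hkey l hl hml
  have hE : Tendsto (fun l => Real.log (u t l) - Real.log l) atTop (nhds (-(D * t))) := by
    have h2 := h0.add_const (-(D * t))
    rw [zero_add] at h2
    exact h2.congr fun l => by ring
  have hexp : Tendsto (fun l => Real.exp (Real.log (u t l) - Real.log l)) atTop
      (nhds (Real.exp (-(D * t)))) := (Real.continuous_exp.tendsto _).comp hE
  refine hexp.congr' ?_
  filter_upwards [eventually_gt_atTop (Real.exp (C * t))] with l hl
  have hl0 : 0 < l := lt_trans (Real.exp_pos _) hl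
  have hu : 0 < u t l := (hlower l hl t ⟨ht, le_rfl⟩).1
  rw [Real.exp_sub, Real.exp_log hu, Real.exp_log hl0]
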